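/- Let p be a prime and k a finite field of characteristic p. Let L = (d/dz)^n + a_1(z)(d/dz)^{n−1} + ⋯ + a_n(z) with a_i ∈ k(z) be a monic differential operator of order n which is fuchsian, for which zero is a regular singular point, and all of whose exponents at zero are equal to zero. If the set Ker(k(z), L) = { P ∈ k(z) : L(P) = 0 } of rational solutions of L is nonzero, then Ker(k(z), L) is a k(z^p)-vector space of dimension exactly 1. -/

import Mathlib

/-- The derivative of a rational function, computed via the quotient rule on the reduced
representation `num/denom`. -/
noncomputable def ratDeriv {k : Type*} [Field k] (f : RatFunc k) : RatFunc k :=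
  (algebraMap (Polynomial k) (RatFunc k) (Polynomial.derivative f.num) *
      algebraMap (Polynomial k) (RatFunc k) f.denom -
    algebraMap (Polynomial k) (RatFunc k) f.num *
      algebraMap (Polynomial k) (RatFunc k) (Polynomial.derivative f.denom)) /
  algebraMap (Polynomial k) (RatFunc k) (f.denom ^ 2)


namespace StmtAux

open Polynomial RatFunc

variable {k : Type*} [Field k]

local notation "aM" => algebraMap (Polynomial k) (RatFunc k)

theorem mul_denom_eq (f : RatFunc k) : f * aM f.denom = aM f.num := by
  exact (eq_div_iff (algebraMap_ne_zero (denom_ne_zero f))).mp (num_div_denom f).symm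

theorem ratDeriv_rep (A B : Polynomial k) (hB : B ≠ 0) {f : RatFunc k}
    (hf : f = aM A / aM B) :
    ratDeriv f = aM (Polynomial.derivative A * B - A * Polynomial.derivative B) / aM (B ^ 2) := by
  have hD : f.denom ≠ 0 := denom_ne_zero f
  have hcross : A * f.denom = f.num * B := by
    apply RatFunc.algebraMap_injective k
    rw [map_mul, map_mul]
    have h2 : f * aM B = aM A := by
      rw [hf, div_mul_cancel₀ _ (algebraMap_ne_zero hB)]
    calc aM A * aM f.denom = (f * aM B) * aM f.denom := by rw [h2]
      _ = (f * aM f.denom) * aM B := by ring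
      _ = aM f.num * aM B := by rw [mul_denom_eq]
  have hcross' : Polynomial.derivative A * f.denom + A * Polynomial.derivative f.denom
      = Polynomial.derivative f.num * B + f.num * Polynomial.derivative B := by
    have := congrArg Polynomial.derivative hcross
    simpa [Polynomial.derivative_mul] using this
  rw [ratDeriv]
  rw [div_eq_div_iff (algebraMap_ne_zero (pow_ne_zero 2 hD)) (algebraMap_ne_zero (pow_ne_zero 2 hB))]
  simp only [← map_mul, ← map_sub]
  refine congrArg _ ?_
  linear_combination (hcross * (Polynomial.derivative B * f.denom + B * Polynomial.derivative f.denom)) - (hcross' * (B * f.denom))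

theorem ratDeriv_algebraMap (A : Polynomial k) :
    ratDeriv (aM A) = aM (Polynomial.derivative A) := by
  rw [ratDeriv_rep A 1 one_ne_zero (by simp)]
  simp

theorem ratDeriv_add' (A B C D : Polynomial k) (hB : B ≠ 0) (hD : D ≠ 0) :
    ratDeriv (aM A / aM B + aM C / aM D)
      = ratDeriv (aM A / aM B) + ratDeriv (aM C / aM D) := by
  have hB' : aM B ≠ 0 := algebraMap_ne_zero hB
  have hD' : aM D ≠ 0 := algebraMap_ne_zero hD
  rw [ratDeriv_rep A B hB rfl, ratDeriv_rep C D hD rfl,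
    ratDeriv_rep (A * D + B * C) (B * D) (mul_ne_zero hB hD)
      (by rw [div_add_div _ _ hB' hD', map_mul, map_add, map_mul, map_mul])]
  simp only [map_mul, map_sub, map_add, map_pow, Polynomial.derivative_mul,
    Polynomial.derivative_add]
  field_simp
  ring

theorem ratDeriv_mul' (A B C D : Polynomial k) (hB : B ≠ 0) (hD : D ≠ 0) :
    ratDeriv (aM A / aM B * (aM C / aM D))
      = ratDeriv (aM A / aM B) * (aM C / aM D) + aM A / aM B * ratDeriv (aM C / aM D) := by
  have hB' : aM B ≠ 0 := algebraMap_ne_zero hB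
  have hD' : aM D ≠ 0 := algebraMap_ne_zero hD
  rw [ratDeriv_rep A B hB rfl, ratDeriv_rep C D hD rfl,
    ratDeriv_rep (A * C) (B * D) (mul_ne_zero hB hD)
      (by rw [div_mul_div_comm, map_mul, map_mul])]
  simp only [map_mul, map_sub, map_add, map_pow, Polynomial.derivative_mul]
  field_simp
  ring

theorem ratDeriv_add (f g : RatFunc k) : ratDeriv (f + g) = ratDeriv f + ratDeriv g := by
  have h := ratDeriv_add' f.num f.denom g.num g.denom (denom_ne_zero f) (denom_ne_zero g)
  rwa [num_div_denom, num_div_denom] at h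

theorem ratDeriv_mul (f g : RatFunc k) :
    ratDeriv (f * g) = ratDeriv f * g + f * ratDeriv g := by
  have h := ratDeriv_mul' f.num f.denom g.num g.denom (denom_ne_zero f) (denom_ne_zero g)
  rwa [num_div_denom, num_div_denom] at h

theorem ratDeriv_one : ratDeriv (1 : RatFunc k) = 0 := by
  have := ratDeriv_algebraMap (1 : Polynomial k)
  simpa using this

theorem ratDeriv_C (c : k) : ratDeriv (RatFunc.C c) = 0 := by
  have := ratDeriv_algebraMap (Polynomial.C c)
  simpa [RatFunc.algebraMap_C] using this

theorem ratDeriv_X : ratDeriv (RatFunc.X : RatFunc k) = 1 := by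
  have := ratDeriv_algebraMap (Polynomial.X : Polynomial k)
  simpa [RatFunc.algebraMap_X] using this

theorem ratDeriv_zero : ratDeriv (0 : RatFunc k) = 0 := by
  have := ratDeriv_algebraMap (0 : Polynomial k)
  simpa using this

theorem ratDeriv_sub (f g : RatFunc k) : ratDeriv (f - g) = ratDeriv f - ratDeriv g := by
  have h1 : ratDeriv (g + (-g)) = ratDeriv g + ratDeriv (-g) := ratDeriv_add _ _
  simp only [add_neg_cancel, ratDeriv_zero] at h1
  have hg : ratDeriv (-g) = -ratDeriv g := by
    rw [eq_neg_iff_add_eq_zero, add_comm]; exact h1.symm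
  rw [sub_eq_add_neg, ratDeriv_add, hg, sub_eq_add_neg]


theorem rep_cross {A B : Polynomial k} (hB : B ≠ 0) {f : RatFunc k}
    (hf : f = aM A / aM B) : A * f.denom = f.num * B := by
  apply RatFunc.algebraMap_injective k
  rw [map_mul, map_mul]
  have hmd : f * aM f.denom = aM f.num :=
    (eq_div_iff (algebraMap_ne_zero (denom_ne_zero f))).mp (num_div_denom f).symm
  have h2 : f * aM B = aM A := by
    rw [hf, div_mul_cancel₀ _ (algebraMap_ne_zero hB)]
  calc aM A * aM f.denom = (f * aM B) * aM f.denom := by rw [h2]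
    _ = (f * aM f.denom) * aM B := by ring
    _ = aM f.num * aM B := by rw [hmd]

/-- `f` is regular (has no pole) at zero. -/
def Reg (f : RatFunc k) : Prop :=
  ∃ A B : Polynomial k, B.eval 0 ≠ 0 ∧ f = aM A / aM B

/-- evaluation at zero -/
noncomputable def Ev (f : RatFunc k) : k := RatFunc.eval (RingHom.id k) 0 f

theorem eval₂_id (q : Polynomial k) : Polynomial.eval₂ (RingHom.id k) (0 : k) q = q.eval 0 := rfl

theorem reg_spec {A B : Polynomial k} (hB : B.eval 0 ≠ 0) {f : RatFunc k}
    (hf : f = aM A / aM B) : f.denom.eval 0 ≠ 0 ∧ Ev f = A.eval 0 / B.eval 0 := by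
  have hB0 : B ≠ 0 := fun h => hB (by simp [h])
  have hcross := rep_cross hB0 hf
  have hdvd : f.denom ∣ B := by
    rcases eq_or_ne f 0 with h0 | h0
    · simp [h0]
    · have hnum : f.num ≠ 0 := num_ne_zero h0
      have : f.denom ∣ f.num * B := ⟨A, by linear_combination -hcross⟩
      exact ((isCoprime_num_denom f).symm).dvd_of_dvd_mul_left this
  obtain ⟨E, hE⟩ := hdvd
  have hden0 : f.denom.eval 0 ≠ 0 := by
    intro h
    rw [hE, Polynomial.eval_mul, h, zero_mul] at hB
    exact hB rfl
  refine ⟨hden0, ?_⟩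
  have := congrArg (Polynomial.eval (0 : k)) hcross
  rw [Polynomial.eval_mul, Polynomial.eval_mul] at this
  rw [Ev, RatFunc.eval, eval₂_id, eval₂_id]
  rw [div_eq_div_iff hden0 hB]
  linear_combination -this

theorem reg_denom_ne {f : RatFunc k} (hf : Reg f) : f.denom.eval 0 ≠ 0 := by
  obtain ⟨A, B, hB, hfe⟩ := hf; exact (reg_spec hB hfe).1

theorem reg_ev {A B : Polynomial k} (hB : B.eval 0 ≠ 0) {f : RatFunc k}
    (hf : f = aM A / aM B) : Ev f = A.eval 0 / B.eval 0 := (reg_spec hB hf).2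

theorem reg_add {f g : RatFunc k} (hf : Reg f) (hg : Reg g) : Reg (f + g) := by
  obtain ⟨A, B, hB, hfe⟩ := hf
  obtain ⟨C, D, hD, hge⟩ := hg
  have hB0 : aM B ≠ 0 := algebraMap_ne_zero (fun h => hB (by simp [h]))
  have hD0 : aM D ≠ 0 := algebraMap_ne_zero (fun h => hD (by simp [h]))
  refine ⟨A * D + B * C, B * D, by simp [hB, hD], ?_⟩
  rw [hfe, hge, div_add_div _ _ hB0 hD0, map_mul, map_add, map_mul, map_mul]

theorem reg_mul {f g : RatFunc k} (hf : Reg f) (hg : Reg g) : Reg (f * g) := by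
  obtain ⟨A, B, hB, hfe⟩ := hf
  obtain ⟨C, D, hD, hge⟩ := hg
  refine ⟨A * C, B * D, by simp [hB, hD], ?_⟩
  rw [hfe, hge, div_mul_div_comm, map_mul, map_mul]

theorem ev_add {f g : RatFunc k} (hf : Reg f) (hg : Reg g) :
    Ev (f + g) = Ev f + Ev g := by
  apply RatFunc.eval_add <;> rw [eval₂_id]
  exacts [reg_denom_ne hf, reg_denom_ne hg]

theorem ev_mul {f g : RatFunc k} (hf : Reg f) (hg : Reg g) :
    Ev (f * g) = Ev f * Ev g := by
  apply RatFunc.eval_mul <;> rw [eval₂_id]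
  exacts [reg_denom_ne hf, reg_denom_ne hg]

theorem reg_algebraMap (A : Polynomial k) : Reg (aM A) :=
  ⟨A, 1, by simp, by simp⟩

theorem ev_algebraMap (A : Polynomial k) : Ev (aM A) = A.eval 0 := by
  have h := reg_ev (A := A) (B := 1) (by simp) (f := aM A) (by simp)
  simpa using h

theorem reg_C (c : k) : Reg (RatFunc.C c) := by
  rw [← RatFunc.algebraMap_C]; exact reg_algebraMap _

theorem ev_C (c : k) : Ev (RatFunc.C c) = c := by
  rw [← RatFunc.algebraMap_C, ev_algebraMap]; simp

-- X * (derivative of a regular function) is regular and vanishes at 0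
theorem reg_X_mul_ratDeriv {f : RatFunc k} (hf : Reg f) :
    Reg (RatFunc.X * ratDeriv f) ∧ Ev (RatFunc.X * ratDeriv f) = 0 := by
  obtain ⟨A, B, hB, hfe⟩ := hf
  have hB0 : B ≠ 0 := fun h => hB (by simp [h])
  have hrep : RatFunc.X * ratDeriv f
      = aM (Polynomial.X * (Polynomial.derivative A * B - A * Polynomial.derivative B)) /
        aM (B ^ 2) := by
    rw [ratDeriv_rep A B hB0 hfe, map_mul, RatFunc.algebraMap_X, mul_div_assoc]
  have hB2 : (B ^ 2).eval 0 ≠ 0 := by simp [hB]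
  refine ⟨⟨_, _, hB2, hrep⟩, ?_⟩
  rw [reg_ev hB2 hrep]
  simp

/-- `f` is a unit at zero: no pole and no zero. -/
def Unit0 (f : RatFunc k) : Prop :=
  ∃ A B : Polynomial k, A.eval 0 ≠ 0 ∧ B.eval 0 ≠ 0 ∧ f = aM A / aM B

theorem unit0_reg {f : RatFunc k} (hf : Unit0 f) : Reg f := by
  obtain ⟨A, B, hA, hB, hfe⟩ := hf; exact ⟨A, B, hB, hfe⟩

theorem unit0_ev_ne {f : RatFunc k} (hf : Unit0 f) : Ev f ≠ 0 := by
  obtain ⟨A, B, hA, hB, hfe⟩ := hf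
  rw [reg_ev hB hfe]
  exact div_ne_zero hA hB

theorem unit0_ne_zero {f : RatFunc k} (hf : Unit0 f) : f ≠ 0 := by
  intro h
  apply unit0_ev_ne hf
  rw [h, Ev]; simp

theorem unit0_mul {f g : RatFunc k} (hf : Unit0 f) (hg : Unit0 g) : Unit0 (f * g) := by
  obtain ⟨A, B, hA, hB, hfe⟩ := hf
  obtain ⟨C, D, hC, hD, hge⟩ := hg
  exact ⟨A * C, B * D, by simp [hA, hC], by simp [hB, hD],
    by rw [hfe, hge, div_mul_div_comm, map_mul, map_mul]⟩

theorem unit0_one : Unit0 (1 : RatFunc k) := ⟨1, 1, by simp, by simp, by simp⟩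

theorem unit0_inv {f : RatFunc k} (hf : Unit0 f) : Unit0 f⁻¹ := by
  obtain ⟨A, B, hA, hB, hfe⟩ := hf
  exact ⟨B, A, hB, hA, by rw [hfe, inv_div]⟩

theorem ev_X_pow_mul {d : ℕ} (hd : 0 < d) {f : RatFunc k} (hf : Reg f) :
    Reg (RatFunc.X ^ d * f) ∧ Ev (RatFunc.X ^ d * f) = 0 := by
  obtain ⟨A, B, hB, hfe⟩ := hf
  have hrep : RatFunc.X ^ d * f = aM (Polynomial.X ^ d * A) / aM B := by
    rw [hfe, map_mul, map_pow, RatFunc.algebraMap_X, mul_div_assoc]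
  refine ⟨⟨_, _, hB, hrep⟩, ?_⟩
  rw [reg_ev hB hrep]
  simp [zero_pow (Nat.pos_iff_ne_zero.mp hd)]

theorem unit0_add_xpow_mul {u u' : RatFunc k} (hu : Unit0 u) (hu' : Unit0 u') {d : ℕ}
    (hd : 0 < d) : Unit0 (u + RatFunc.X ^ d * u') := by
  obtain ⟨A, B, hA, hB, hue⟩ := hu
  obtain ⟨C, D, hC, hD, hue'⟩ := hu'
  have hB0 : aM B ≠ 0 := algebraMap_ne_zero (fun h => hB (by simp [h]))
  have hD0 : aM D ≠ 0 := algebraMap_ne_zero (fun h => hD (by simp [h]))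
  refine ⟨A * D + Polynomial.X ^ d * (B * C), B * D, ?_, by simp [hB, hD], ?_⟩
  · simp [hA, hD, zero_pow (Nat.pos_iff_ne_zero.mp hd)]
  · rw [hue, hue']
    rw [map_add, map_mul, map_mul, map_mul, map_pow, RatFunc.algebraMap_X, map_mul]
    field_simp



/-- `f` has order `v` at zero. -/
def HasOrd (f : RatFunc k) (v : ℤ) : Prop :=
  ∃ (a b : ℕ) (u : RatFunc k), Unit0 u ∧ (a : ℤ) - b = v ∧
    f * RatFunc.X ^ b = RatFunc.X ^ a * u

theorem X_ne_zero' : (RatFunc.X : RatFunc k) ≠ 0 := by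
  rw [← RatFunc.algebraMap_X]
  exact algebraMap_ne_zero Polynomial.X_ne_zero

theorem xpow_unit_eq {s t : ℕ} {u u' : RatFunc k} (hu : Unit0 u) (hu' : Unit0 u')
    (h : RatFunc.X ^ s * u = RatFunc.X ^ t * u') : s = t := by
  by_contra hne
  -- wlog s < t
  rcases Nat.lt_or_ge s t with hlt | hge
  · have hc : u = RatFunc.X ^ (t - s) * u' := by
      have hX : (RatFunc.X : RatFunc k) ^ s ≠ 0 := pow_ne_zero _ X_ne_zero'
      have : RatFunc.X ^ s * u = RatFunc.X ^ s * (RatFunc.X ^ (t - s) * u') := by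
        rw [h, ← mul_assoc, ← pow_add, Nat.add_sub_cancel' hlt.le]
      exact mul_left_cancel₀ hX this
    have h1 := unit0_ev_ne hu
    have h2 := (ev_X_pow_mul (Nat.sub_pos_of_lt hlt) (unit0_reg hu')).2
    rw [hc] at h1
    exact h1 h2
  · have hlt : t < s := lt_of_le_of_ne hge (Ne.symm hne)
    have hc : u' = RatFunc.X ^ (s - t) * u := by
      have hX : (RatFunc.X : RatFunc k) ^ t ≠ 0 := pow_ne_zero _ X_ne_zero'
      have : RatFunc.X ^ t * u' = RatFunc.X ^ t * (RatFunc.X ^ (s - t) * u) := by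
        rw [← h, ← mul_assoc, ← pow_add, Nat.add_sub_cancel' hlt.le]
      exact mul_left_cancel₀ hX this
    have h1 := unit0_ev_ne hu'
    have h2 := (ev_X_pow_mul (Nat.sub_pos_of_lt hlt) (unit0_reg hu)).2
    rw [hc] at h1
    exact h1 h2

theorem hasOrd_ne_zero {f : RatFunc k} {v : ℤ} (h : HasOrd f v) : f ≠ 0 := by
  obtain ⟨a, b, u, hu, -, he⟩ := h
  intro h0
  rw [h0, zero_mul] at he
  have hX : (RatFunc.X : RatFunc k) ^ a ≠ 0 := pow_ne_zero _ X_ne_zero'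
  rcases mul_eq_zero.mp he.symm with h | h
  · exact hX h
  · exact unit0_ne_zero hu h

theorem hasOrd_unique {f : RatFunc k} {v w : ℤ} (hv : HasOrd f v) (hw : HasOrd f w) :
    v = w := by
  obtain ⟨a, b, u, hu, hab, he⟩ := hv
  obtain ⟨a', b', u', hu', hab', he'⟩ := hw
  have key : RatFunc.X ^ (a + b') * u = RatFunc.X ^ (a' + b) * u' := by
    have h1 := congrArg (· * RatFunc.X ^ b') he
    have h2 := congrArg (· * RatFunc.X ^ b) he'
    simp only [pow_add] at *
    calc RatFunc.X ^ a * RatFunc.X ^ b' * u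
        = f * RatFunc.X ^ b * RatFunc.X ^ b' := by rw [he]; ring
      _ = f * RatFunc.X ^ b' * RatFunc.X ^ b := by ring
      _ = RatFunc.X ^ a' * RatFunc.X ^ b * u' := by rw [he']; ring
  have := xpow_unit_eq hu hu' key
  omega

theorem hasOrd_mul {f g : RatFunc k} {v w : ℤ} (hf : HasOrd f v) (hg : HasOrd g w) :
    HasOrd (f * g) (v + w) := by
  obtain ⟨a, b, u, hu, hab, he⟩ := hf
  obtain ⟨a', b', u', hu', hab', he'⟩ := hg
  refine ⟨a + a', b + b', u * u', unit0_mul hu hu', by omega, ?_⟩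
  rw [pow_add, pow_add]
  calc f * g * (RatFunc.X ^ b * RatFunc.X ^ b')
      = (f * RatFunc.X ^ b) * (g * RatFunc.X ^ b') := by ring
    _ = (RatFunc.X ^ a * u) * (RatFunc.X ^ a' * u') := by rw [he, he']
    _ = RatFunc.X ^ a * RatFunc.X ^ a' * (u * u') := by ring

theorem hasOrd_inv {f : RatFunc k} {v : ℤ} (hf : HasOrd f v) : HasOrd f⁻¹ (-v) := by
  obtain ⟨a, b, u, hu, hab, he⟩ := hf
  have hf0 : f ≠ 0 := hasOrd_ne_zero ⟨a, b, u, hu, hab, he⟩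
  have hu0 : u ≠ 0 := unit0_ne_zero hu
  refine ⟨b, a, u⁻¹, unit0_inv hu, by omega, ?_⟩
  have h2 : f * (f⁻¹ * RatFunc.X ^ a) = f * (RatFunc.X ^ b * u⁻¹) := by
    rw [← mul_assoc, mul_inv_cancel₀ hf0, one_mul, ← mul_assoc, he, mul_assoc,
      mul_inv_cancel₀ hu0, mul_one]
  exact mul_left_cancel₀ hf0 h2

theorem hasOrd_xpow (i : ℕ) : HasOrd (RatFunc.X ^ i : RatFunc k) i :=
  ⟨i, 0, 1, unit0_one, by omega, by simp⟩

theorem hasOrd_add_lt {f g : RatFunc k} {v w : ℤ} (hf : HasOrd f v) (hg : HasOrd g w)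
    (hvw : v < w) : HasOrd (f + g) v := by
  obtain ⟨a, b, u, hu, hab, he⟩ := hf
  obtain ⟨a', b', u', hu', hab', he'⟩ := hg
  have hd : a + b' < a' + b := by omega
  set d := (a' + b) - (a + b') with hdd
  have hdpos : 0 < d := by omega
  refine ⟨a + b', b + b', u + RatFunc.X ^ d * u', unit0_add_xpow_mul hu hu' hdpos, by omega, ?_⟩
  have hsplit : a' + b = (a + b') + d := by omega
  calc (f + g) * RatFunc.X ^ (b + b')
      = (f * RatFunc.X ^ b) * RatFunc.X ^ b' + (g * RatFunc.X ^ b') * RatFunc.X ^ b := by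
        rw [pow_add]; ring
    _ = (RatFunc.X ^ a * u) * RatFunc.X ^ b' + (RatFunc.X ^ a' * u') * RatFunc.X ^ b := by
        rw [he, he']
    _ = RatFunc.X ^ (a + b') * u + RatFunc.X ^ (a' + b) * u' := by
        rw [pow_add, pow_add]; ring
    _ = RatFunc.X ^ (a + b') * (u + RatFunc.X ^ d * u') := by
        rw [hsplit, pow_add]; ring

theorem poly_ord {A : Polynomial k} (hA : A ≠ 0) :
    ∃ (a : ℕ) (A₁ : Polynomial k), A₁.eval 0 ≠ 0 ∧ A = Polynomial.X ^ a * A₁ := by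
  obtain ⟨g, hg, hnd⟩ := A.exists_eq_pow_rootMultiplicity_mul_and_not_dvd hA 0
  refine ⟨_, g, ?_, by simpa using hg⟩
  intro h0
  apply hnd
  simpa [Polynomial.X_dvd_iff, Polynomial.coeff_zero_eq_eval_zero] using h0

theorem hasOrd_algebraMap {A : Polynomial k} (hA : A ≠ 0) :
    ∃ a : ℕ, HasOrd (aM A) (a : ℤ) := by
  obtain ⟨a, A₁, hA₁, hAe⟩ := poly_ord hA
  refine ⟨a, a, 0, aM A₁, ⟨A₁, 1, hA₁, by simp, by simp⟩, by omega, ?_⟩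
  rw [hAe, map_mul, map_pow, RatFunc.algebraMap_X]
  simp

theorem hasOrd_nonneg_shape {f : RatFunc k} {m : ℕ} (h : HasOrd f (m : ℤ)) :
    ∃ u : RatFunc k, Unit0 u ∧ f = RatFunc.X ^ m * u := by
  obtain ⟨a, b, u, hu, hab, he⟩ := h
  have ha : a = m + b := by omega
  refine ⟨u, hu, ?_⟩
  have hX : (RatFunc.X : RatFunc k) ^ b ≠ 0 := pow_ne_zero _ X_ne_zero'
  apply mul_right_cancel₀ hX
  rw [he, ha, pow_add]
  ring

theorem exists_hasOrd {f : RatFunc k} (hf : f ≠ 0) : ∃ v : ℤ, HasOrd f v := by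
  have hN : f.num ≠ 0 := num_ne_zero hf
  have hD : f.denom ≠ 0 := denom_ne_zero f
  obtain ⟨a, N₁, hN₁, hNe⟩ := poly_ord hN
  obtain ⟨b, D₁, hD₁, hDe⟩ := poly_ord hD
  refine ⟨(a : ℤ) - b, a, b, aM N₁ / aM D₁, ⟨N₁, D₁, hN₁, hD₁, rfl⟩, rfl, ?_⟩
  have hD₁0 : aM D₁ ≠ 0 := algebraMap_ne_zero (fun h => hD₁ (by simp [h]))
  have hX : ∀ m : ℕ, (RatFunc.X : RatFunc k) ^ m ≠ 0 := fun m => pow_ne_zero _ X_ne_zero'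
  have h1 : f * (RatFunc.X ^ b * aM D₁) = RatFunc.X ^ a * aM N₁ := by
    have h2 : (RatFunc.X : RatFunc k) ^ b * aM D₁ = aM f.denom := by
      rw [hDe, map_mul, map_pow, RatFunc.algebraMap_X]
    have h3 : (RatFunc.X : RatFunc k) ^ a * aM N₁ = aM f.num := by
      rw [hNe, map_mul, map_pow, RatFunc.algebraMap_X]
    rw [h2, h3, mul_denom_eq]
  rw [mul_div_assoc', eq_div_iff hD₁0]
  linear_combination h1


theorem ker_deriv_num_denom {f : RatFunc k} (h : ratDeriv f = 0) :
    Polynomial.derivative f.num = 0 ∧ Polynomial.derivative f.denom = 0 := by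
  have hD : f.denom ≠ 0 := denom_ne_zero f
  have hnum : Polynomial.derivative f.num * f.denom
      = f.num * Polynomial.derivative f.denom := by
    have h2 : aM (Polynomial.derivative f.num * f.denom
        - f.num * Polynomial.derivative f.denom) = 0 := by
      rw [ratDeriv] at h
      rw [_root_.div_eq_zero_iff] at h
      rcases h with h | h
      · rw [map_sub, map_mul, map_mul]; linear_combination h
      · exact absurd h (algebraMap_ne_zero (pow_ne_zero 2 hD))
    have h3 := RatFunc.algebraMap_injective k (h2.trans (map_zero _).symm)
    linear_combination h3
  constructor
  · rcases eq_or_ne f.num 0 with h0 | h0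
    · simp [h0]
    · have hdvd : f.num ∣ Polynomial.derivative f.num := by
        have : f.num ∣ Polynomial.derivative f.num * f.denom :=
          ⟨Polynomial.derivative f.denom, hnum⟩
        exact (isCoprime_num_denom f).dvd_of_dvd_mul_right this
      by_contra hne
      have := Polynomial.degree_le_of_dvd hdvd hne
      exact absurd this (not_le.mpr (Polynomial.degree_derivative_lt h0))
  · have hdvd : f.denom ∣ Polynomial.derivative f.denom := by
      have : f.denom ∣ f.num * Polynomial.derivative f.denom :=
        ⟨Polynomial.derivative f.num, by linear_combination -hnum⟩
      exact (isCoprime_num_denom f).symm.dvd_of_dvd_mul_left this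
    by_contra hne
    have := Polynomial.degree_le_of_dvd hdvd hne
    exact absurd this (not_le.mpr (Polynomial.degree_derivative_lt hD))

variable (p : ℕ)

/-- the subfield `k(z^p)` -/
noncomputable def Kp (k : Type*) [Field k] (p : ℕ) : Subfield (RatFunc k) :=
  Subfield.closure (Set.range (RatFunc.C : k →+* RatFunc k) ∪ {RatFunc.X ^ p})

theorem expand_mem (E : Polynomial k) : aM (Polynomial.expand k p E) ∈ Kp k p := by
  rw [Polynomial.coe_expand]
  rw [Polynomial.eval₂_eq_sum, Polynomial.sum, map_sum]
  apply Subfield.sum_mem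
  intro e he
  rw [map_mul, map_pow]
  apply Subfield.mul_mem
  · rw [RatFunc.algebraMap_C]
    exact Subfield.subset_closure (Or.inl ⟨E.coeff e, rfl⟩)
  · apply Subfield.pow_mem
    rw [map_pow, RatFunc.algebraMap_X]
    exact Subfield.subset_closure (Or.inr rfl)

variable {p}

theorem mem_Kp_of_ratDeriv_zero [CharP k p] (hp : p ≠ 0) [Fact (Nat.Prime p)]
    {f : RatFunc k} (h : ratDeriv f = 0) : f ∈ Kp k p := by
  obtain ⟨hN, hD⟩ := ker_deriv_num_denom h
  have hNe : Polynomial.expand k p (Polynomial.contract p f.num) = f.num :=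
    Polynomial.expand_contract p hN hp
  have hDe : Polynomial.expand k p (Polynomial.contract p f.denom) = f.denom :=
    Polynomial.expand_contract p hD hp
  rw [← num_div_denom f, div_eq_mul_inv]
  apply Subfield.mul_mem
  · rw [← hNe]; exact expand_mem p _
  · apply Subfield.inv_mem
    rw [← hDe]; exact expand_mem p _

theorem hasOrd_expand [CharP k p] (hp : p ≠ 0) {E : Polynomial k} (hE : E ≠ 0) :
    ∃ e : ℕ, HasOrd (aM (Polynomial.expand k p E)) ((p : ℤ) * e) := by
  obtain ⟨e, E₁, hE₁, hEe⟩ := poly_ord hE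
  refine ⟨e, ?_⟩
  have h1 : Polynomial.expand k p E = Polynomial.X ^ (p * e) * Polynomial.expand k p E₁ := by
    rw [hEe, map_mul, map_pow, Polynomial.expand_X, ← pow_mul]
  have h2 : (Polynomial.expand k p E₁).eval 0 ≠ 0 := by
    rw [Polynomial.expand_eval, zero_pow hp]
    exact hE₁
  refine ⟨p * e, 0, aM (Polynomial.expand k p E₁), ⟨_, 1, h2, by simp, by simp⟩, by push_cast; ring, ?_⟩
  rw [h1, map_mul, map_pow, RatFunc.algebraMap_X]
  simp

theorem hasOrd_ker [CharP k p] (hp : p ≠ 0) {f : RatFunc k} (hf : f ≠ 0)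
    (h : ratDeriv f = 0) : ∃ w : ℤ, HasOrd f ((p : ℤ) * w) := by
  obtain ⟨hN, hD⟩ := ker_deriv_num_denom h
  have hNe : Polynomial.expand k p (Polynomial.contract p f.num) = f.num :=
    Polynomial.expand_contract p hN hp
  have hDe : Polynomial.expand k p (Polynomial.contract p f.denom) = f.denom :=
    Polynomial.expand_contract p hD hp
  have hN0 : Polynomial.contract p f.num ≠ 0 := by
    intro h0; apply num_ne_zero hf; rw [← hNe, h0, map_zero]
  have hD0 : Polynomial.contract p f.denom ≠ 0 := by
    intro h0; apply denom_ne_zero f; rw [← hDe, h0, map_zero]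
  obtain ⟨e, he⟩ := hasOrd_expand hp hN0
  obtain ⟨d, hd⟩ := hasOrd_expand hp hD0
  rw [hNe] at he; rw [hDe] at hd
  refine ⟨(e : ℤ) - d, ?_⟩
  have := hasOrd_mul he (hasOrd_inv hd)
  rw [← num_div_denom f, div_eq_mul_inv]
  have harith : (p : ℤ) * e + -((p : ℤ) * d) = (p : ℤ) * ((e : ℤ) - d) := by ring
  rwa [harith] at this


theorem iterate_ratDeriv_add (j : ℕ) (x y : RatFunc k) :
    ratDeriv^[j] (x + y) = ratDeriv^[j] x + ratDeriv^[j] y := by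
  induction j generalizing x y with
  | zero => simp
  | succ j ih => rw [Function.iterate_succ_apply, Function.iterate_succ_apply,
      Function.iterate_succ_apply, ratDeriv_add, ih]

theorem iterate_ratDeriv_smul {c : RatFunc k} (hc : ratDeriv c = 0) (j : ℕ) (x : RatFunc k) :
    ratDeriv^[j] (c * x) = c * ratDeriv^[j] x := by
  induction j generalizing x with
  | zero => simp
  | succ j ih => rw [Function.iterate_succ_apply, Function.iterate_succ_apply,
      ratDeriv_mul, hc, zero_mul, zero_add, ih]

theorem iterate_ratDeriv_zero (j : ℕ) : ratDeriv^[j] (0 : RatFunc k) = 0 := by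
  induction j with
  | zero => simp
  | succ j ih => rw [Function.iterate_succ_apply, ratDeriv_zero, ih]

theorem iterate_ratDeriv_neg (j : ℕ) (x : RatFunc k) :
    ratDeriv^[j] (-x) = -ratDeriv^[j] x := by
  have h := iterate_ratDeriv_add j x (-x)
  simp only [add_neg_cancel] at h
  rw [iterate_ratDeriv_zero] at h
  linear_combination -h

theorem iterate_ratDeriv_sub (j : ℕ) (x y : RatFunc k) :
    ratDeriv^[j] (x - y) = ratDeriv^[j] x - ratDeriv^[j] y := by
  rw [sub_eq_add_neg, iterate_ratDeriv_add, iterate_ratDeriv_neg, sub_eq_add_neg]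

theorem xpow_eq (s : ℕ) : (RatFunc.X : RatFunc k) ^ s = aM (Polynomial.X ^ s) := by
  rw [map_pow, RatFunc.algebraMap_X]

theorem x_mul_derivX (s : ℕ) :
    (RatFunc.X : RatFunc k) * aM (Polynomial.derivative (Polynomial.X ^ s))
      = RatFunc.C ((s : k)) * RatFunc.X ^ s := by
  cases s with
  | zero => simp
  | succ s =>
    rw [Polynomial.derivative_X_pow, Nat.add_sub_cancel, map_mul, map_pow,
      RatFunc.algebraMap_X, RatFunc.algebraMap_C]
    push_cast
    ring

theorem ev_sum (s : Finset ℕ) (F : ℕ → RatFunc k) (h : ∀ i ∈ s, Reg (F i)) :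
    Reg (∑ i ∈ s, F i) ∧ Ev (∑ i ∈ s, F i) = ∑ i ∈ s, Ev (F i) := by
  classical
  induction s using Finset.induction with
  | empty => exact ⟨⟨0, 1, by simp, by simp⟩, by rw [Finset.sum_empty, Finset.sum_empty, Ev]; simp⟩
  | @insert x s' hx ih =>
    have hx' : Reg (F x) := h x (Finset.mem_insert_self x s')
    obtain ⟨hr, he⟩ := ih (fun i hi => h i (Finset.mem_insert_of_mem hi))
    rw [Finset.sum_insert hx, Finset.sum_insert hx]
    exact ⟨reg_add hx' hr, by rw [ev_add hx' hr, he]⟩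


theorem rdX (s : ℕ) : ratDeriv ((RatFunc.X : RatFunc k) ^ s)
    = aM (Polynomial.derivative (Polynomial.X ^ s)) := by
  rw [xpow_eq, ratDeriv_algebraMap]

theorem main_ord {p : ℕ} [CharP k p] (hp : p.Prime) {n : ℕ} (hn : 1 ≤ n) (a : ℕ → RatFunc k)
    (hreg0 : ∀ i ∈ Finset.Icc 1 n, ¬ (Polynomial.X ^ (i + 1) ∣ RatFunc.denom (a i)))
    (hexp : (∏ t ∈ Finset.range n, (Polynomial.X - Polynomial.C ((t : k)))) +
        ∑ i ∈ Finset.Icc 1 n,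
          Polynomial.C (RatFunc.eval (RingHom.id k) 0 (RatFunc.X ^ i * a i)) *
            ∏ t ∈ Finset.range (n - i), (Polynomial.X - Polynomial.C ((t : k)))
      = Polynomial.X ^ n)
    {y : RatFunc k}
    (hsol : ratDeriv^[n] y + ∑ i ∈ Finset.Icc 1 n, a i * ratDeriv^[n - i] y = 0)
    {v : ℤ} (hv : HasOrd y v) : (p : ℤ) ∣ v := by
  have hy : y ≠ 0 := hasOrd_ne_zero hv
  set M := v.natAbs with hM
  have hDXpM : ratDeriv ((RatFunc.X : RatFunc k) ^ (p * M)) = 0 := by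
    rw [rdX, Polynomial.derivative_X_pow]
    have h0 : ((p * M : ℕ) : k) = 0 := by
      rw [Nat.cast_mul, CharP.cast_eq_zero k p, zero_mul]
    rw [h0, map_zero, zero_mul, map_zero]
  set y₂ := RatFunc.X ^ (p * M) * y with hy₂def
  have hsol₂ : ratDeriv^[n] y₂ + ∑ i ∈ Finset.Icc 1 n, a i * ratDeriv^[n - i] y₂ = 0 := by
    have h1 : ∀ j, ratDeriv^[j] y₂ = RatFunc.X ^ (p * M) * ratDeriv^[j] y :=
      fun j => iterate_ratDeriv_smul hDXpM j y
    calc ratDeriv^[n] y₂ + ∑ i ∈ Finset.Icc 1 n, a i * ratDeriv^[n - i] y₂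
        = RatFunc.X ^ (p * M) *
            (ratDeriv^[n] y + ∑ i ∈ Finset.Icc 1 n, a i * ratDeriv^[n - i] y) := by
          rw [mul_add, Finset.mul_sum]
          congr 1
          · exact h1 n
          · exact Finset.sum_congr rfl (fun i _ => by rw [h1 (n - i)]; ring)
      _ = RatFunc.X ^ (p * M) * 0 := by rw [hsol]
      _ = 0 := mul_zero _
  have hord₂ : HasOrd y₂ (((p * M : ℕ) : ℤ) + v) := hasOrd_mul (hasOrd_xpow (p * M)) hv
  have hnn : 0 ≤ ((p * M : ℕ) : ℤ) + v := by
    have h1 : (M : ℤ) ≤ ((p * M : ℕ) : ℤ) := by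
      push_cast
      have h2 : (1 : ℤ) ≤ (p : ℤ) := by exact_mod_cast hp.one_lt.le
      nlinarith [Int.natCast_nonneg M]
    have h2 : (M : ℤ) + v ≥ 0 := by
      rw [hM]
      rcases Int.natAbs_eq v with h | h <;> omega
    omega
  set m := (((p * M : ℕ) : ℤ) + v).toNat with hmdef
  have hmz : ((m : ℕ) : ℤ) = ((p * M : ℕ) : ℤ) + v := Int.toNat_of_nonneg hnn
  obtain ⟨u, hu, hy₂⟩ := hasOrd_nonneg_shape (show HasOrd y₂ ((m : ℕ) : ℤ) by rwa [hmz])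
  -- the induction
  have claim : ∀ j, ∃ w : RatFunc k, Reg w ∧
      Ev w = (∏ t ∈ Finset.range j, ((m : k) - (t : k))) * Ev u ∧
      RatFunc.X ^ j * ratDeriv^[j] y₂ = RatFunc.X ^ m * w := by
    intro j
    induction j with
    | zero => exact ⟨u, unit0_reg hu, by simp, by simpa using hy₂⟩
    | succ j ih =>
      obtain ⟨w, hwreg, hwev, hweq⟩ := ih
      refine ⟨RatFunc.C ((m : k) - (j : k)) * w + RatFunc.X * ratDeriv w, ?_, ?_, ?_⟩
      · exact reg_add (reg_mul (reg_C _) hwreg) (reg_X_mul_ratDeriv hwreg).1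
      · rw [ev_add (reg_mul (reg_C _) hwreg) (reg_X_mul_ratDeriv hwreg).1,
          ev_mul (reg_C _) hwreg, ev_C, (reg_X_mul_ratDeriv hwreg).2, hwev,
          Finset.prod_range_succ]
        ring
      · have hd := congrArg ratDeriv hweq
        rw [ratDeriv_mul, ratDeriv_mul, rdX j, rdX m] at hd
        have e1 := x_mul_derivX (k := k) j
        have e2 := x_mul_derivX (k := k) m
        have e3 : RatFunc.C ((m : k) - (j : k)) = RatFunc.C ((m : k)) - RatFunc.C ((j : k)) :=
          map_sub _ _ _
        rw [Function.iterate_succ_apply']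
        linear_combination RatFunc.X * hd + w * e2 - (ratDeriv^[j] y₂) * e1
          - RatFunc.C ((j : k)) * hweq - (RatFunc.X ^ m * w) * e3
  choose w hwreg hwev hweq using claim
  -- regularity of `X^i * a i`
  have hXa : ∀ i ∈ Finset.Icc 1 n, Reg (RatFunc.X ^ i * a i) := by
    intro i hi
    obtain ⟨b, D₁, hD₁, hDe⟩ := poly_ord (denom_ne_zero (a i))
    have hbi : b ≤ i := by
      by_contra hb
      exact hreg0 i hi (dvd_trans (pow_dvd_pow _ (by omega)) ⟨D₁, hDe⟩)
    refine ⟨Polynomial.X ^ (i - b) * (a i).num, D₁, hD₁, ?_⟩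
    have hD₁0 : aM D₁ ≠ 0 := algebraMap_ne_zero (fun h => hD₁ (by simp [h]))
    rw [eq_div_iff hD₁0]
    apply mul_right_cancel₀ (pow_ne_zero b (X_ne_zero' (k := k)))
    have hden : (RatFunc.X : RatFunc k) ^ b * aM D₁ = aM ((a i).denom) := by
      rw [hDe, map_mul, map_pow, RatFunc.algebraMap_X]
    calc RatFunc.X ^ i * a i * aM D₁ * RatFunc.X ^ b
        = RatFunc.X ^ i * (a i * ((RatFunc.X : RatFunc k) ^ b * aM D₁)) := by ring
      _ = RatFunc.X ^ i * aM ((a i).num) := by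
          rw [hden, mul_denom_eq]
      _ = aM (Polynomial.X ^ (i - b) * (a i).num) * RatFunc.X ^ b := by
          rw [map_mul, map_pow, RatFunc.algebraMap_X]
          have hpow : (RatFunc.X : RatFunc k) ^ i = RatFunc.X ^ (i - b) * RatFunc.X ^ b := by
            rw [← pow_add]; congr 1; omega
          rw [hpow]; ring
  -- the key algebraic identity
  have E0 : RatFunc.X ^ m *
      (w n + ∑ i ∈ Finset.Icc 1 n, (RatFunc.X ^ i * a i) * w (n - i)) = 0 := by
    calc RatFunc.X ^ m * (w n + ∑ i ∈ Finset.Icc 1 n, (RatFunc.X ^ i * a i) * w (n - i))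
        = RatFunc.X ^ n *
            (ratDeriv^[n] y₂ + ∑ i ∈ Finset.Icc 1 n, a i * ratDeriv^[n - i] y₂) := by
          rw [mul_add, mul_add, Finset.mul_sum, Finset.mul_sum, ← hweq n]
          congr 1
          apply Finset.sum_congr rfl
          intro i hi
          have hin : i ≤ n := (Finset.mem_Icc.mp hi).2
          have hsplit : (RatFunc.X : RatFunc k) ^ n = RatFunc.X ^ i * RatFunc.X ^ (n - i) := by
            rw [← pow_add]; congr 1; omega
          rw [hsplit]
          linear_combination -(RatFunc.X ^ i * a i) * hweq (n - i)
      _ = RatFunc.X ^ n * 0 := by rw [hsol₂]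
      _ = 0 := mul_zero _
  have E : w n + ∑ i ∈ Finset.Icc 1 n, (RatFunc.X ^ i * a i) * w (n - i) = 0 := by
    rcases mul_eq_zero.mp E0 with h | h
    · exact absurd h (pow_ne_zero m (X_ne_zero' (k := k)))
    · exact h
  -- evaluate at zero
  have hregs : ∀ i ∈ Finset.Icc 1 n, Reg ((RatFunc.X ^ i * a i) * w (n - i)) :=
    fun i hi => reg_mul (hXa i hi) (hwreg _)
  have hEvE : Ev (w n + ∑ i ∈ Finset.Icc 1 n, (RatFunc.X ^ i * a i) * w (n - i)) = 0 := by
    rw [E, Ev]; simp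
  rw [ev_add (hwreg n) (ev_sum _ _ hregs).1, (ev_sum _ _ hregs).2] at hEvE
  have hterm : ∀ i ∈ Finset.Icc 1 n, Ev ((RatFunc.X ^ i * a i) * w (n - i))
      = RatFunc.eval (RingHom.id k) 0 (RatFunc.X ^ i * a i) *
          ((∏ t ∈ Finset.range (n - i), ((m : k) - (t : k))) * Ev u) := by
    intro i hi
    rw [ev_mul (hXa i hi) (hwreg _), hwev (n - i)]
    rfl
  rw [Finset.sum_congr rfl hterm, hwev n] at hEvE
  -- evaluate hexp at (m : k)
  have hpoly := congrArg (Polynomial.eval ((m : ℕ) : k)) hexp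
  rw [Polynomial.eval_add, Polynomial.eval_pow, Polynomial.eval_X,
    Polynomial.eval_finset_sum, Polynomial.eval_prod] at hpoly
  simp only [Polynomial.eval_mul, Polynomial.eval_prod, Polynomial.eval_sub,
    Polynomial.eval_X, Polynomial.eval_C] at hpoly
  have hfinal : ((m : k)) ^ n * Ev u = 0 := by
    rw [← hpoly, add_mul, Finset.sum_mul]
    have hsum : ∑ i ∈ Finset.Icc 1 n,
        (RatFunc.eval (RingHom.id k) 0 (RatFunc.X ^ i * a i) *
          ∏ x ∈ Finset.range (n - i), ((m : k) - (x : k))) * Ev u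
        = ∑ i ∈ Finset.Icc 1 n,
        RatFunc.eval (RingHom.id k) 0 (RatFunc.X ^ i * a i) *
          ((∏ x ∈ Finset.range (n - i), ((m : k) - (x : k))) * Ev u) :=
      Finset.sum_congr rfl (fun i _ => by ring)
    rw [hsum]
    exact hEvE
  have hEvu : Ev u ≠ 0 := unit0_ev_ne hu
  have hmk : ((m : ℕ) : k) = 0 := by
    have := mul_eq_zero.mp hfinal
    rcases this with h | h
    · exact pow_eq_zero_iff (by omega) |>.mp h
    · exact absurd h hEvu
  have hpm : p ∣ m := (CharP.cast_eq_zero_iff k p m).mp hmk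
  obtain ⟨c, hc⟩ := hpm
  refine ⟨(c : ℤ) - M, ?_⟩
  have : ((m : ℕ) : ℤ) = (p : ℤ) * c := by exact_mod_cast congrArg (Nat.cast : ℕ → ℤ) hc
  push_cast at hmz this ⊢
  linarith [hmz, this]


theorem exists_decomp {p : ℕ} (hp : 0 < p) (W : Polynomial k) :
    ∃ U : ℕ → Polynomial k,
      W = ∑ i ∈ Finset.range p, Polynomial.X ^ i * Polynomial.expand k p (U i) := by
  induction W using Polynomial.induction_on' with
  | add f g hf hg =>
    obtain ⟨U1, h1⟩ := hf
    obtain ⟨U2, h2⟩ := hg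
    refine ⟨fun i => U1 i + U2 i, ?_⟩
    rw [h1, h2, ← Finset.sum_add_distrib]
    exact Finset.sum_congr rfl (fun i _ => by rw [map_add, mul_add])
  | monomial e c =>
    refine ⟨fun i => if i = e % p then Polynomial.monomial (e / p) c else 0, ?_⟩
    have hterm : ∀ i ∈ Finset.range p,
        Polynomial.X ^ i *
          Polynomial.expand k p (if i = e % p then Polynomial.monomial (e / p) c else 0)
        = if i = e % p then
            Polynomial.X ^ i * Polynomial.expand k p (Polynomial.monomial (e / p) c) else 0 := by
      intro i _
      split_ifs <;> simp
    rw [Finset.sum_congr rfl hterm, Finset.sum_ite_eq' (Finset.range p) (e % p)]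
    rw [if_pos (Finset.mem_range.mpr (Nat.mod_lt e hp))]
    rw [Polynomial.expand_monomial, ← Polynomial.C_mul_X_pow_eq_monomial,
      ← Polynomial.C_mul_X_pow_eq_monomial, ← mul_assoc, mul_comm (Polynomial.X ^ (e % p)) _,
      mul_assoc, ← pow_add, Nat.mod_add_div']

theorem ratDeriv_expand_quot {p : ℕ} [CharP k p] (hp : 0 < p) {E F : Polynomial k} (hF : F ≠ 0) :
    ratDeriv (aM (Polynomial.expand k p E) / aM (Polynomial.expand k p F)) = 0 := by
  have hF' : Polynomial.expand k p F ≠ 0 := fun h => hF ((Polynomial.expand_eq_zero hp).mp h)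
  have hder : ∀ G : Polynomial k, Polynomial.derivative (Polynomial.expand k p G) = 0 := by
    intro G
    rw [Polynomial.derivative_expand]
    have : ((p : Polynomial k)) = 0 := by
      rw [← Polynomial.C_eq_natCast, CharP.cast_eq_zero k p, map_zero]
    rw [this]
    ring
  rw [ratDeriv_rep _ _ hF' rfl, hder, hder]
  simp

theorem ratfunc_decomp {p : ℕ} [CharP k p] (hp : p.Prime) (f : RatFunc k) :
    ∃ c : ℕ → RatFunc k, (∀ i, ratDeriv (c i) = 0) ∧
      f = ∑ i ∈ Finset.range p, c i * RatFunc.X ^ i := by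
  set B := f.denom with hB
  have hB0 : B ≠ 0 := denom_ne_zero f
  set W := f.num * B ^ (p - 1) with hW
  obtain ⟨U, hU⟩ := exists_decomp hp.pos W
  have hBp : B ^ p ≠ 0 := pow_ne_zero _ hB0
  have hBpd : Polynomial.derivative (B ^ p) = 0 := by
    rw [Polynomial.derivative_pow]
    have : (Polynomial.C ((p : k))) = 0 := by
      rw [CharP.cast_eq_zero k p, map_zero]
    rw [this]
    ring
  have hBpe : Polynomial.expand k p (Polynomial.contract p (B ^ p)) = B ^ p :=
    Polynomial.expand_contract p hBpd hp.ne_zero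
  refine ⟨fun i => aM (Polynomial.expand k p (U i)) / aM (B ^ p), ?_, ?_⟩
  · intro i
    have := ratDeriv_expand_quot (p := p) hp.pos (E := U i) (F := Polynomial.contract p (B ^ p))
      (fun h => hBp (by rw [← hBpe, h, map_zero]))
    rwa [hBpe] at this
  · have hf : f = aM W / aM (B ^ p) := by
      rw [hW, eq_div_iff (algebraMap_ne_zero hBp), map_mul]
      have : aM (B ^ p) = aM B ^ p := map_pow _ _ _
      rw [this, show p = (p - 1) + 1 by (have := hp.pos; omega), pow_succ, map_pow]
      calc f * (aM B ^ (p - 1) * aM B) = (f * aM B) * aM B ^ (p - 1) := by ring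
        _ = aM f.num * aM B ^ (p - 1) := by
            rw [show f * aM B = aM f.num from mul_denom_eq f]
    rw [hf, hU, map_sum, Finset.sum_div]
    exact Finset.sum_congr rfl (fun i _ => by
      rw [map_mul, map_pow, RatFunc.algebraMap_X, div_mul_eq_mul_div, mul_comm])


theorem sum_ord_aux {p : ℕ} [CharP k p] (hp : p.Prime) {c : ℕ → RatFunc k}
    (hc : ∀ i, ratDeriv (c i) = 0) (s : Finset ℕ) (hsub : s ⊆ Finset.Icc 1 (p - 1)) :
    (∀ i ∈ s, c i * RatFunc.X ^ i = 0) ∨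
    ∃ (w : ℤ) (i₀ : ℕ), i₀ ∈ s ∧ HasOrd (∑ i ∈ s, c i * RatFunc.X ^ i) w ∧
      w % p = (i₀ : ℤ) := by
  classical
  induction s using Finset.induction with
  | empty => exact Or.inl (fun i hi => absurd hi (Finset.notMem_empty i))
  | @insert x s' hx ih =>
    have hsub' : s' ⊆ Finset.Icc 1 (p - 1) :=
      fun i hi => hsub (Finset.mem_insert_of_mem hi)
    have hxmem : x ∈ Finset.Icc 1 (p - 1) := hsub (Finset.mem_insert_self x s')
    obtain ⟨hx1, hx2⟩ := Finset.mem_Icc.mp hxmem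
    rcases eq_or_ne (c x * RatFunc.X ^ x) 0 with hzx | hzx
    · rcases ih hsub' with hall | ⟨w, i₀, hi₀, hw, hwp⟩
      · exact Or.inl (fun i hi => by
          rcases Finset.mem_insert.mp hi with h | h
          · rw [h]; exact hzx
          · exact hall i h)
      · exact Or.inr ⟨w, i₀, Finset.mem_insert_of_mem hi₀,
          by rwa [Finset.sum_insert hx, hzx, zero_add], hwp⟩
    · have hcx : c x ≠ 0 := fun h => hzx (by rw [h, zero_mul])
      obtain ⟨e, he⟩ := hasOrd_ker hp.ne_zero hcx (hc x)
      have hordx : HasOrd (c x * RatFunc.X ^ x) ((p : ℤ) * e + x) :=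
        hasOrd_mul he (hasOrd_xpow x)
      have hxp : x < p := by have := hp.pos; omega
      have hxmod : ((p : ℤ) * e + x) % p = (x : ℤ) := by
        rw [add_comm, Int.add_mul_emod_self_left]
        exact Int.emod_eq_of_lt (by positivity) (by exact_mod_cast hxp)
      rcases ih hsub' with hall | ⟨w, i₀, hi₀, hw, hwp⟩
      · refine Or.inr ⟨(p : ℤ) * e + x, x, Finset.mem_insert_self x s', ?_, hxmod⟩
        rw [Finset.sum_insert hx, Finset.sum_eq_zero hall, add_zero]
        exact hordx
      · have hne : ((p : ℤ) * e + x) ≠ w := by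
          intro hEq
          rw [← hEq, hxmod] at hwp
          have hxi : x = i₀ := by exact_mod_cast hwp
          exact hx (hxi ▸ hi₀)
        rcases lt_or_gt_of_ne hne with hlt | hgt
        · refine Or.inr ⟨(p : ℤ) * e + x, x, Finset.mem_insert_self x s', ?_, hxmod⟩
          rw [Finset.sum_insert hx]
          exact hasOrd_add_lt hordx hw hlt
        · refine Or.inr ⟨w, i₀, Finset.mem_insert_of_mem hi₀, ?_, hwp⟩
          rw [Finset.sum_insert hx, add_comm]
          exact hasOrd_add_lt hw hordx hgt

theorem sol_sub {n : ℕ} {a : ℕ → RatFunc k} {P Q cc : RatFunc k} (hc : ratDeriv cc = 0)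
    (hP : ratDeriv^[n] P + ∑ i ∈ Finset.Icc 1 n, a i * ratDeriv^[n - i] P = 0)
    (hQ : ratDeriv^[n] Q + ∑ i ∈ Finset.Icc 1 n, a i * ratDeriv^[n - i] Q = 0) :
    ratDeriv^[n] (Q - cc * P) +
      ∑ i ∈ Finset.Icc 1 n, a i * ratDeriv^[n - i] (Q - cc * P) = 0 := by
  have h1 : ∀ j, ratDeriv^[j] (Q - cc * P) = ratDeriv^[j] Q - cc * ratDeriv^[j] P :=
    fun j => by rw [iterate_ratDeriv_sub, iterate_ratDeriv_smul hc]
  calc ratDeriv^[n] (Q - cc * P) +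
        ∑ i ∈ Finset.Icc 1 n, a i * ratDeriv^[n - i] (Q - cc * P)
      = (ratDeriv^[n] Q + ∑ i ∈ Finset.Icc 1 n, a i * ratDeriv^[n - i] Q)
        - cc * (ratDeriv^[n] P + ∑ i ∈ Finset.Icc 1 n, a i * ratDeriv^[n - i] P) := by
        rw [h1 n, Finset.sum_congr rfl (fun i _ => by rw [h1 (n - i)] :
          ∀ i ∈ Finset.Icc 1 n, a i * ratDeriv^[n - i] (Q - cc * P)
            = a i * (ratDeriv^[n - i] Q - cc * ratDeriv^[n - i] P))]
        rw [mul_add, Finset.mul_sum]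
        rw [show ∑ i ∈ Finset.Icc 1 n, a i * (ratDeriv^[n - i] Q - cc * ratDeriv^[n - i] P)
            = ∑ i ∈ Finset.Icc 1 n,
              (a i * ratDeriv^[n - i] Q - cc * (a i * ratDeriv^[n - i] P)) from
          Finset.sum_congr rfl (fun i _ => by ring)]
        rw [Finset.sum_sub_distrib]
        ring
    _ = 0 - cc * 0 := by rw [hP, hQ]
    _ = 0 := by ring

end StmtAux

open StmtAux in
/-- Let `k` be a finite field of characteristic `p` and let
`L = (d/dz)^n + a 1 (d/dz)^{n-1} + ⋯ + a n` be a monic fuchsian differential operator with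
coefficients in `k(z)` such that zero is a regular singular point of `L` and all exponents
of `L` at zero are zero (the indicial polynomial at zero,
`x(x−1)⋯(x−n+1) + ∑_{i=1}^{n} (zⁱ aᵢ)(0) · x(x−1)⋯(x−n+i+1)`, equals `xⁿ`).
If `L` has a nonzero rational solution, then the space of rational solutions of `L` is a
`k(z^p)`-vector space of dimension exactly `1`: it has a nonzero element `P` such that every
solution is a `k(z^p)`-multiple of `P`, where `k(z^p)` is the subfield of `k(z)` generated by
the constants and `z^p`. -/
theorem stmt4 (p : ℕ) (hp : p.Prime) (k : Type) [Field k] [Fintype k] [CharP k p]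
    (n : ℕ) (hn : 1 ≤ n) (a : ℕ → RatFunc k)
    -- infinity is a regular singular point
    (hinfty : ∀ i ∈ Finset.Icc 1 n,
      (RatFunc.num (a i)).degree + (i : WithBot ℕ) ≤ (RatFunc.denom (a i)).degree)
    -- every finite singular point (in the algebraic closure) is regular singular
    (hreg : ∀ α : AlgebraicClosure k,
      (∃ i ∈ Finset.Icc 1 n,
        Polynomial.eval α ((RatFunc.denom (a i)).map (algebraMap k (AlgebraicClosure k))) = 0) →
      ∀ i ∈ Finset.Icc 1 n,
        ¬ ((Polynomial.X - Polynomial.C α) ^ (i + 1) ∣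
            (RatFunc.denom (a i)).map (algebraMap k (AlgebraicClosure k))))
    -- zero is a singular point of L …
    (hsing0 : ∃ i ∈ Finset.Icc 1 n, Polynomial.eval 0 (RatFunc.denom (a i)) = 0)
    -- … and it is regular singular: `zⁱ aᵢ` has no pole at zero
    (hreg0 : ∀ i ∈ Finset.Icc 1 n, ¬ (Polynomial.X ^ (i + 1) ∣ RatFunc.denom (a i)))
    -- all exponents of L at zero equal zero
    (hexp : (∏ t ∈ Finset.range n, (Polynomial.X - Polynomial.C ((t : k)))) +
        ∑ i ∈ Finset.Icc 1 n,
          Polynomial.C (RatFunc.eval (RingHom.id k) 0 (RatFunc.X ^ i * a i)) *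
            ∏ t ∈ Finset.range (n - i), (Polynomial.X - Polynomial.C ((t : k)))
      = Polynomial.X ^ n)
    -- the space of rational solutions of L is nonzero
    (hker : ∃ P : RatFunc k, P ≠ 0 ∧
      ratDeriv^[n] P + ∑ i ∈ Finset.Icc 1 n, a i * ratDeriv^[n - i] P = 0) :
    ∃ P : RatFunc k, P ≠ 0 ∧
      (ratDeriv^[n] P + ∑ i ∈ Finset.Icc 1 n, a i * ratDeriv^[n - i] P = 0) ∧
      ∀ Q : RatFunc k,
        (ratDeriv^[n] Q + ∑ i ∈ Finset.Icc 1 n, a i * ratDeriv^[n - i] Q = 0) →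
        ∃ c ∈ Subfield.closure
            (Set.range (RatFunc.C : k →+* RatFunc k) ∪ {RatFunc.X ^ p}),
          Q = c * P := by
  classical
  haveI : Fact (Nat.Prime p) := ⟨hp⟩
  obtain ⟨P, hP0, hPsol⟩ := hker
  refine ⟨P, hP0, hPsol, ?_⟩
  intro Q hQsol
  by_cases hQ0 : Q = 0
  · exact ⟨0, Subfield.zero_mem _, by rw [hQ0, zero_mul]⟩
  set f := Q / P with hf
  have hfP : Q = f * P := by rw [hf, div_mul_cancel₀ _ hP0]
  by_cases hdf : ratDeriv f = 0
  · exact ⟨f, StmtAux.mem_Kp_of_ratDeriv_zero hp.ne_zero hdf, hfP⟩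
  · exfalso
    obtain ⟨c, hc, hfe⟩ := StmtAux.ratfunc_decomp hp f
    have hsplit : Finset.range p = insert 0 (Finset.Icc 1 (p - 1)) := by
      ext t
      simp only [Finset.mem_range, Finset.mem_insert, Finset.mem_Icc]
      have := hp.pos
      omega
    have hfe2 : f = c 0 + ∑ i ∈ Finset.Icc 1 (p - 1), c i * RatFunc.X ^ i := by
      rw [hfe, hsplit, Finset.sum_insert (by simp)]
      simp
    set g := ∑ i ∈ Finset.Icc 1 (p - 1), c i * RatFunc.X ^ i with hg
    have hgne : g ≠ 0 := by
      intro h0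
      apply hdf
      have : f = c 0 := by rw [hfe2, h0, add_zero]
      rw [this]
      exact hc 0
    rcases StmtAux.sum_ord_aux hp hc (Finset.Icc 1 (p - 1)) (subset_refl _) with
      hall | ⟨w, i₀, hi₀, hw, hwp⟩
    · exact hgne (by rw [hg]; exact Finset.sum_eq_zero hall)
    rw [← hg] at hw
    have hQ' : Q - c 0 * P = g * P := by rw [hfP, hfe2]; ring
    have hQ'sol := StmtAux.sol_sub (hc 0) hPsol hQsol
    obtain ⟨vP, hvP⟩ := StmtAux.exists_hasOrd hP0
    have hdvP : (p : ℤ) ∣ vP := StmtAux.main_ord hp hn a hreg0 hexp hPsol hvP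
    have hordQ' : StmtAux.HasOrd (Q - c 0 * P) (w + vP) := by
      rw [hQ']
      exact StmtAux.hasOrd_mul hw hvP
    have hdQ' : (p : ℤ) ∣ (w + vP) := StmtAux.main_ord hp hn a hreg0 hexp hQ'sol hordQ'
    have hpw : (p : ℤ) ∣ w := by
      have h1 := dvd_sub hdQ' hdvP
      simpa using h1
    have hw0 : w % p = 0 := Int.emod_eq_zero_of_dvd hpw
    rw [hwp] at hw0
    have hi₀0 : i₀ = 0 := by exact_mod_cast hw0
    obtain ⟨h1, -⟩ := Finset.mem_Icc.mp hi₀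
    omega
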